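/- For every finite group G there exists a characteristic abelian subgroup M ≤ G such that for every abelian subgroup A ≤ G one has [G : M] ≤ [G : A]². -/

import Mathlib

open Subgroup

section ChermakDelgado

variable {G : Type*} [Group G] [Finite G]

omit [Finite G] in
private lemma cd_card_inf_mul_relindex (H K : Subgroup G) :
    Nat.card ↥(H ⊓ K) * H.relIndex K = Nat.card K := by
  have h1 : Nat.card ↥(H ⊓ K) = Nat.card ((H ⊓ K).subgroupOf K) :=
    (Nat.card_congr (subgroupOfEquivOfLe (inf_le_right : H ⊓ K ≤ K)).toEquiv).symm
  rw [h1, inf_subgroupOf_right]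
  exact Subgroup.card_mul_index _

private lemma cd_card_mul_card_le (H K : Subgroup G) :
    Nat.card H * Nat.card K ≤ Nat.card ↥(H ⊓ K) * Nat.card ↥(H ⊔ K) := by
  have h2 : Nat.card H * H.relIndex (H ⊔ K) = Nat.card ↥(H ⊔ K) := by
    have h := cd_card_inf_mul_relindex H (H ⊔ K)
    rwa [inf_eq_left.mpr le_sup_left] at h
  have hcard : Nat.card ↥(H ⊔ K) ≠ 0 := Nat.card_pos.ne'
  have hpos : H.relIndex (H ⊔ K) ≠ 0 := by
    intro h
    rw [h, mul_zero] at h2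
    exact hcard h2.symm
  have h3 : H.relIndex K ≤ H.relIndex (H ⊔ K) :=
    relIndex_le_of_le_right (le_sup_right : K ≤ H ⊔ K) hpos
  have key : Nat.card K = Nat.card ↥(H ⊓ K) * H.relIndex K :=
    (cd_card_inf_mul_relindex H K).symm
  rw [key, ← h2]
  calc Nat.card H * (Nat.card ↥(H ⊓ K) * H.relIndex K)
      = Nat.card ↥(H ⊓ K) * (Nat.card H * H.relIndex K) := by ring
    _ ≤ Nat.card ↥(H ⊓ K) * (Nat.card H * H.relIndex (H ⊔ K)) :=
        Nat.mul_le_mul_left _ (Nat.mul_le_mul_left _ h3)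

/-- The Chermak–Delgado measure. -/
private noncomputable def cdMeasure (H : Subgroup G) : ℕ :=
  Nat.card H * Nat.card (centralizer (H : Set G))

omit [Finite G] in
private lemma cd_le_centralizer_centralizer (H : Subgroup G) :
    H ≤ centralizer ((centralizer (H : Set G) : Subgroup G) : Set G) :=
  fun _ hx => Set.subset_centralizer_centralizer hx

omit [Finite G] in
private lemma cd_inf_centralizer_le (H K : Subgroup G) :
    centralizer (H : Set G) ⊓ centralizer (K : Set G) ≤ centralizer ((H ⊔ K : Subgroup G) : Set G) := by
  rw [le_centralizer_iff]
  refine sup_le ?_ ?_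
  · refine le_trans (cd_le_centralizer_centralizer H) (centralizer_le ?_)
    exact fun x hx => (inf_le_left : _ ⊓ _ ≤ centralizer (H : Set G)) hx
  · refine le_trans (cd_le_centralizer_centralizer K) (centralizer_le ?_)
    exact fun x hx => (inf_le_right : _ ⊓ _ ≤ centralizer (K : Set G)) hx

omit [Finite G] in
private lemma cd_sup_centralizer_le (H K : Subgroup G) :
    centralizer (H : Set G) ⊔ centralizer (K : Set G) ≤ centralizer ((H ⊓ K : Subgroup G) : Set G) := by
  refine sup_le (centralizer_le ?_) (centralizer_le ?_)
  · exact fun x hx => (inf_le_left : H ⊓ K ≤ H) hx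
  · exact fun x hx => (inf_le_right : H ⊓ K ≤ K) hx

/-- Submultiplicativity of the Chermak–Delgado measure. -/
private lemma cd_measure_mul_le (H K : Subgroup G) :
    cdMeasure H * cdMeasure K ≤ cdMeasure (H ⊔ K) * cdMeasure (H ⊓ K) := by
  have e1 : Nat.card H * Nat.card K ≤ Nat.card ↥(H ⊓ K) * Nat.card ↥(H ⊔ K) :=
    cd_card_mul_card_le H K
  have e2 : Nat.card (centralizer (H : Set G)) * Nat.card (centralizer (K : Set G)) ≤
      Nat.card ↥(centralizer (H : Set G) ⊓ centralizer (K : Set G)) *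
      Nat.card ↥(centralizer (H : Set G) ⊔ centralizer (K : Set G)) :=
    cd_card_mul_card_le _ _
  have e3 : Nat.card ↥(centralizer (H : Set G) ⊓ centralizer (K : Set G)) ≤
      Nat.card (centralizer ((H ⊔ K : Subgroup G) : Set G)) :=
    Subgroup.card_le_of_le (cd_inf_centralizer_le H K)
  have e4 : Nat.card ↥(centralizer (H : Set G) ⊔ centralizer (K : Set G)) ≤
      Nat.card (centralizer ((H ⊓ K : Subgroup G) : Set G)) :=
    Subgroup.card_le_of_le (cd_sup_centralizer_le H K)
  calc cdMeasure H * cdMeasure K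
      = (Nat.card H * Nat.card K) *
        (Nat.card (centralizer (H : Set G)) * Nat.card (centralizer (K : Set G))) := by
        unfold cdMeasure; ring
    _ ≤ (Nat.card ↥(H ⊓ K) * Nat.card ↥(H ⊔ K)) *
        (Nat.card ↥(centralizer (H : Set G) ⊓ centralizer (K : Set G)) *
         Nat.card ↥(centralizer (H : Set G) ⊔ centralizer (K : Set G))) :=
        Nat.mul_le_mul e1 e2
    _ ≤ (Nat.card ↥(H ⊓ K) * Nat.card ↥(H ⊔ K)) *
        (Nat.card (centralizer ((H ⊔ K : Subgroup G) : Set G)) *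
         Nat.card (centralizer ((H ⊓ K : Subgroup G) : Set G))) :=
        Nat.mul_le_mul_left _ (Nat.mul_le_mul e3 e4)
    _ = cdMeasure (H ⊔ K) * cdMeasure (H ⊓ K) := by
        unfold cdMeasure; ring

omit [Finite G] in
/-- The centralizer of the image under an automorphism is the image of the centralizer. -/
private lemma cd_centralizer_map (φ : G ≃* G) (H : Subgroup G) :
    Subgroup.map φ.toMonoidHom (centralizer (H : Set G)) =
      centralizer ((Subgroup.map φ.toMonoidHom H : Subgroup G) : Set G) := by
  ext g
  rw [Subgroup.mem_map_equiv]
  simp only [mem_centralizer_iff]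
  constructor
  · rintro h x hx
    obtain ⟨y, hy, rfl⟩ : ∃ y ∈ H, φ y = x := by
      rcases hx with ⟨y, hy, rfl⟩
      exact ⟨y, hy, rfl⟩
    have := h y hy
    have : φ (y * φ.symm g) = φ (φ.symm g * y) := congrArg φ this
    simpa using this
  · intro h y hy
    have hx : (φ y : G) ∈ (Subgroup.map φ.toMonoidHom H : Subgroup G) :=
      Subgroup.mem_map_of_mem _ hy
    have := h (φ y) hx
    have := congrArg φ.symm this
    simpa using this

omit [Finite G] in
private lemma cd_measure_map (φ : G ≃* G) (H : Subgroup G) :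
    cdMeasure (Subgroup.map φ.toMonoidHom H) = cdMeasure H := by
  unfold cdMeasure
  have c1 : Nat.card (Subgroup.map φ.toMonoidHom H) = Nat.card H :=
    (Nat.card_congr (Subgroup.equivMapOfInjective H _ φ.injective).toEquiv).symm
  have c2 : Nat.card (centralizer ((Subgroup.map φ.toMonoidHom H : Subgroup G) : Set G)) =
      Nat.card (centralizer (H : Set G)) := by
    rw [← cd_centralizer_map]
    exact (Nat.card_congr (Subgroup.equivMapOfInjective _ _ φ.injective).toEquiv).symm
  rw [c1, c2]

end ChermakDelgado

/-- Chermak–Delgado: every finite group `G` has a characteristic abelian subgroup `M`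
such that `[G : M] ≤ [G : A]²` for every abelian subgroup `A ≤ G`. -/
theorem stmt_8 (G : Type*) [Group G] [Finite G] :
    ∃ M : Subgroup G, M.Characteristic ∧ (∀ a ∈ M, ∀ b ∈ M, a * b = b * a) ∧
      ∀ A : Subgroup G, (∀ a ∈ A, ∀ b ∈ A, a * b = b * a) → M.index ≤ A.index ^ 2 := by
  classical
  -- a maximizer of the measure exists
  obtain ⟨N, hN⟩ : ∃ N : Subgroup G, ∀ K : Subgroup G, cdMeasure K ≤ cdMeasure N :=
    Finite.exists_max cdMeasure
  -- among maximizers, pick one of minimal cardinality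
  let S : Set (Subgroup G) := {H | ∀ K : Subgroup G, cdMeasure K ≤ cdMeasure H}
  haveI : Nonempty S := ⟨⟨N, hN⟩⟩
  obtain ⟨⟨M, hMS⟩, hMmin⟩ : ∃ M : S, ∀ H : S, Nat.card (M : Subgroup G) ≤ Nat.card (H : Subgroup G) :=
    Finite.exists_min (fun H : S => Nat.card (H : Subgroup G))
  have hMpos : 0 < cdMeasure M := by
    have h1 : 0 < Nat.card M := Nat.card_pos
    have h2 : 0 < Nat.card (centralizer (M : Set G)) := Nat.card_pos
    exact Nat.mul_pos h1 h2
  -- M is the least maximizer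
  have hleast : ∀ H : Subgroup G, H ∈ S → M ≤ H := by
    intro H hH
    have key : cdMeasure M * cdMeasure H ≤ cdMeasure M * cdMeasure (M ⊓ H) := by
      calc cdMeasure M * cdMeasure H ≤ cdMeasure (M ⊔ H) * cdMeasure (M ⊓ H) :=
            cd_measure_mul_le M H
        _ ≤ cdMeasure M * cdMeasure (M ⊓ H) :=
            Nat.mul_le_mul_right _ (hMS (M ⊔ H))
    have hH' : cdMeasure H ≤ cdMeasure (M ⊓ H) := Nat.le_of_mul_le_mul_left key hMpos
    have hinf : (M ⊓ H) ∈ S := fun K => le_trans (le_trans (hH K) hH') le_rfl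
    have hcard : Nat.card (M : Subgroup G) ≤ Nat.card ↥(M ⊓ H) := hMmin ⟨M ⊓ H, hinf⟩
    have : M ⊓ H = M := Subgroup.eq_of_le_of_card_ge inf_le_left hcard
    rw [← this]
    exact inf_le_right
  -- characteristic
  have hchar : M.Characteristic := by
    rw [characteristic_iff_map_eq]
    intro φ
    have hmem : ∀ ψ : G ≃* G, Subgroup.map ψ.toMonoidHom M ∈ S := by
      intro ψ K
      rw [cd_measure_map]
      exact hMS K
    have h1 : M ≤ Subgroup.map φ.toMonoidHom M := hleast _ (hmem φ)
    have h2 : M ≤ Subgroup.map φ.symm.toMonoidHom M := hleast _ (hmem φ.symm)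
    have h3 : Subgroup.map φ.toMonoidHom M ≤ Subgroup.map φ.toMonoidHom (Subgroup.map φ.symm.toMonoidHom M) :=
      Subgroup.map_mono h2
    have h4 : Subgroup.map φ.toMonoidHom (Subgroup.map φ.symm.toMonoidHom M) = M := by
      rw [Subgroup.map_map]
      convert Subgroup.map_id M using 2
      ext x
      simp
    exact le_antisymm (le_trans h3 (le_of_eq h4)) h1
  -- abelian : M ≤ centralizer M
  have habel : M ≤ centralizer (M : Set G) := by
    refine hleast _ ?_
    intro K
    have : cdMeasure M ≤ cdMeasure (centralizer (M : Set G)) := by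
      unfold cdMeasure
      calc Nat.card M * Nat.card (centralizer (M : Set G))
          = Nat.card (centralizer (M : Set G)) * Nat.card M := Nat.mul_comm _ _
        _ ≤ Nat.card (centralizer (M : Set G)) *
            Nat.card (centralizer ((centralizer (M : Set G) : Subgroup G) : Set G)) :=
            Nat.mul_le_mul_left _ (Subgroup.card_le_of_le (cd_le_centralizer_centralizer M))
    exact le_trans (hMS K) this
  refine ⟨M, hchar, ?_, ?_⟩
  · intro a ha b hb
    exact habel hb a ha
  · intro A hA
    have hAC : A ≤ centralizer (A : Set G) := by
      intro a ha
      rw [mem_centralizer_iff]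
      intro b hb
      exact hA b hb a ha
    have hA2 : Nat.card A ^ 2 ≤ cdMeasure A := by
      unfold cdMeasure
      rw [sq]
      exact Nat.mul_le_mul_left _ (Subgroup.card_le_of_le hAC)
    have hMG : cdMeasure M ≤ Nat.card M * Nat.card G := by
      unfold cdMeasure
      refine Nat.mul_le_mul_left _ ?_
      exact Nat.le_of_dvd Nat.card_pos (Subgroup.card_subgroup_dvd_card _)
    have hkey : Nat.card A ^ 2 ≤ Nat.card M * Nat.card G :=
      le_trans (le_trans hA2 (hMS A)) hMG
    -- conclude index inequality
    have hApos : 0 < Nat.card A ^ 2 := pow_pos Nat.card_pos 2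
    refine Nat.le_of_mul_le_mul_right ?_ hApos
    calc M.index * Nat.card A ^ 2
        ≤ M.index * (Nat.card M * Nat.card G) := Nat.mul_le_mul_left _ hkey
      _ = (M.index * Nat.card M) * Nat.card G := by ring
      _ = Nat.card G * Nat.card G := by rw [Subgroup.index_mul_card]
      _ = (A.index * Nat.card A) ^ 2 := by rw [Subgroup.index_mul_card]; ring
      _ = A.index ^ 2 * Nat.card A ^ 2 := by ring
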